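/- Deterministic self-normalized decomposition: for any λ > 0, any vectors x_1, …, x_t ∈ ℝ^d, and any reals η_1, …, η_t, one has ‖d_t‖²_{Z_t^{-1}} ≤ ∑_{i=1}^t [2 η_i x_iᵀ Z_{i-1}^{-1} d_{i-1} / (1 + w_i²)] + ∑_{i=1}^t [η_i² w_i² / (1 + w_i²)]. -/

import Mathlib

open Matrix Finset

/-- `√(vᵀ A v)`, the (semi-)norm of `v` induced by a positive definite matrix `A`. -/
noncomputable def matNorm {d : ℕ} (A : Matrix (Fin d) (Fin d) ℝ) (v : Fin d → ℝ) : ℝ :=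
  Real.sqrt (v ⬝ᵥ (A *ᵥ v))

/-- The regularized Gram matrix `Z_t = λ I + ∑_{i=1}^t x_i x_iᵀ`. -/
noncomputable def gramZ {d : ℕ} (lam : ℝ) (x : ℕ → Fin d → ℝ) (t : ℕ) :
    Matrix (Fin d) (Fin d) ℝ :=
  lam • (1 : Matrix (Fin d) (Fin d) ℝ) + ∑ i ∈ Finset.Icc 1 t, vecMulVec (x i) (x i)

/-- `d_t = ∑_{i=1}^t η_i x_i`. -/
noncomputable def dVec {d : ℕ} (x : ℕ → Fin d → ℝ) (η : ℕ → ℝ) (t : ℕ) : Fin d → ℝ :=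
  ∑ i ∈ Finset.Icc 1 t, η i • x i

section Aux

variable {d : ℕ}

lemma vecMulVec_mulVec' (a b v : Fin d → ℝ) :
    vecMulVec a b *ᵥ v = (b ⬝ᵥ v) • a := by
  ext i
  simp only [mulVec, dotProduct, vecMulVec_apply, Pi.smul_apply, smul_eq_mul]
  rw [Finset.sum_mul]
  exact Finset.sum_congr rfl fun j _ => by ring

lemma vecMulVec_mul' (a b : Fin d → ℝ) (M : Matrix (Fin d) (Fin d) ℝ) :
    vecMulVec a b * M = vecMulVec a (b ᵥ* M) := by
  ext i j
  simp only [Matrix.mul_apply, vecMulVec_apply, vecMul, dotProduct]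
  rw [Finset.mul_sum]
  exact Finset.sum_congr rfl fun k _ => by ring

lemma mul_vecMulVec' (a b : Fin d → ℝ) (M : Matrix (Fin d) (Fin d) ℝ) :
    M * vecMulVec a b = vecMulVec (M *ᵥ a) b := by
  ext i j
  simp only [Matrix.mul_apply, vecMulVec_apply, mulVec, dotProduct]
  rw [Finset.sum_mul]
  exact Finset.sum_congr rfl fun k _ => by ring

lemma vecMulVec_mul_vecMulVec (a b c e : Fin d → ℝ) :
    vecMulVec a b * vecMulVec c e = (b ⬝ᵥ c) • vecMulVec a e := by
  ext i j
  simp only [Matrix.mul_apply, vecMulVec_apply, dotProduct, Matrix.smul_apply, smul_eq_mul]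
  rw [Finset.sum_mul]
  exact Finset.sum_congr rfl fun k _ => by ring

lemma posSemidef_vecMulVec (a : Fin d → ℝ) : (vecMulVec a a).PosSemidef := by
  refine Matrix.PosSemidef.of_dotProduct_mulVec_nonneg ?_ ?_
  · ext i j
    simp [conjTranspose, vecMulVec_apply, mul_comm]
  · intro v
    rw [star_trivial, vecMulVec_mulVec', dotProduct_smul, smul_eq_mul, dotProduct_comm]
    exact mul_self_nonneg _

lemma gramZ_posDef (lam : ℝ) (hlam : 0 < lam) (x : ℕ → Fin d → ℝ) (t : ℕ) :
    (gramZ lam x t).PosDef := by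
  unfold gramZ
  apply Matrix.PosDef.add_posSemidef
  · rw [Matrix.smul_one_eq_diagonal]
    exact Matrix.posDef_diagonal_iff.mpr fun _ => hlam
  · refine Finset.sum_induction _ _ (fun A B hA hB => hA.add hB) Matrix.PosSemidef.zero ?_
    exact fun i _ => posSemidef_vecMulVec (x i)

lemma inv_symm {Z : Matrix (Fin d) (Fin d) ℝ} (hZ : Z.PosDef) : Z⁻¹ᵀ = Z⁻¹ := by
  have := hZ.isHermitian.inv
  simpa [Matrix.IsHermitian, conjTranspose_eq_transpose_of_trivial] using this

lemma dot_symm {Z : Matrix (Fin d) (Fin d) ℝ} (hZ : Z.PosDef) (u v : Fin d → ℝ) :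
    u ⬝ᵥ Z⁻¹ *ᵥ v = v ⬝ᵥ Z⁻¹ *ᵥ u := by
  rw [dotProduct_mulVec, ← mulVec_transpose, inv_symm hZ, dotProduct_comm]

lemma quad_nonneg {Z : Matrix (Fin d) (Fin d) ℝ} (hZ : Z.PosDef) (v : Fin d → ℝ) :
    0 ≤ v ⬝ᵥ Z⁻¹ *ᵥ v := by
  have := hZ.posSemidef.inv.dotProduct_mulVec_nonneg v
  simpa using this

/-- Sherman–Morrison. -/
lemma sherman_morrison {Z : Matrix (Fin d) (Fin d) ℝ} (hZ : Z.PosDef) (x : Fin d → ℝ) :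
    (Z + vecMulVec x x)⁻¹ =
      Z⁻¹ - (1 + x ⬝ᵥ Z⁻¹ *ᵥ x)⁻¹ • (Z⁻¹ * vecMulVec x x * Z⁻¹) := by
  set A := vecMulVec x x with hA
  set w : ℝ := x ⬝ᵥ Z⁻¹ *ᵥ x with hw
  have hw0 : 0 ≤ w := quad_nonneg hZ x
  have hwpos : (0:ℝ) < 1 + w := by linarith
  set c : ℝ := (1 + w)⁻¹ with hc
  have hZi : Z * Z⁻¹ = 1 := Z.mul_nonsing_inv hZ.det_pos.ne'.isUnit
  apply Matrix.inv_eq_right_inv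
  set B := vecMulVec x (x ᵥ* Z⁻¹) with hB
  have h2 : A * Z⁻¹ = B := vecMulVec_mul' x x Z⁻¹
  have h4 : Z * (Z⁻¹ * A * Z⁻¹) = B := by
    rw [← Matrix.mul_assoc, ← Matrix.mul_assoc, hZi, Matrix.one_mul, h2]
  have h3 : A * (Z⁻¹ * A * Z⁻¹) = w • B := by
    have : A * (Z⁻¹ * A * Z⁻¹) = (A * Z⁻¹ * A) * Z⁻¹ := by
      rw [Matrix.mul_assoc, Matrix.mul_assoc, Matrix.mul_assoc]
    rw [this, h2, hB, hA, vecMulVec_mul_vecMulVec, Matrix.smul_mul, vecMulVec_mul']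
    congr 1
    rw [hw, dotProduct_mulVec]
  have expand : (Z + A) * (Z⁻¹ - c • (Z⁻¹ * A * Z⁻¹)) =
      Z * Z⁻¹ + A * Z⁻¹ - c • (Z * (Z⁻¹ * A * Z⁻¹)) - c • (A * (Z⁻¹ * A * Z⁻¹)) := by
    rw [Matrix.add_mul, Matrix.mul_sub, Matrix.mul_sub, Matrix.mul_smul, Matrix.mul_smul]
    abel
  rw [expand, hZi, h2, h4, h3, smul_smul]
  have hcsum : c + c * w = 1 := by
    rw [hc]
    field_simp
  calc 1 + B - c • B - (c * w) • B = 1 + B - (c + c * w) • B := by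
        rw [add_smul]; abel
    _ = 1 := by rw [hcsum, one_smul]; abel

lemma quad_update {Z : Matrix (Fin d) (Fin d) ℝ} (hZ : Z.PosDef) (x v : Fin d → ℝ) :
    v ⬝ᵥ (Z + vecMulVec x x)⁻¹ *ᵥ v =
      v ⬝ᵥ Z⁻¹ *ᵥ v - (1 + x ⬝ᵥ Z⁻¹ *ᵥ x)⁻¹ * (x ⬝ᵥ Z⁻¹ *ᵥ v) ^ 2 := by
  rw [sherman_morrison hZ x, Matrix.sub_mulVec, Matrix.smul_mulVec]
  have h1 : (Z⁻¹ * vecMulVec x x * Z⁻¹) *ᵥ v = (x ⬝ᵥ Z⁻¹ *ᵥ v) • (Z⁻¹ *ᵥ x) := by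
    rw [← Matrix.mulVec_mulVec, ← Matrix.mulVec_mulVec, vecMulVec_mulVec', mulVec_smul]
  rw [h1, dotProduct_sub, dotProduct_smul, dotProduct_smul, smul_eq_mul, smul_eq_mul,
    dot_symm hZ v x]
  ring

lemma step_ineq {Z : Matrix (Fin d) (Fin d) ℝ} (hZ : Z.PosDef) (x v : Fin d → ℝ) (η : ℝ) :
    (v + η • x) ⬝ᵥ (Z + vecMulVec x x)⁻¹ *ᵥ (v + η • x) ≤
      v ⬝ᵥ Z⁻¹ *ᵥ v + 2 * η * (x ⬝ᵥ Z⁻¹ *ᵥ v) / (1 + x ⬝ᵥ Z⁻¹ *ᵥ x) +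
        η ^ 2 * (x ⬝ᵥ Z⁻¹ *ᵥ x) / (1 + x ⬝ᵥ Z⁻¹ *ᵥ x) := by
  set w : ℝ := x ⬝ᵥ Z⁻¹ *ᵥ x with hw
  set a : ℝ := x ⬝ᵥ Z⁻¹ *ᵥ v with ha
  set B : ℝ := v ⬝ᵥ Z⁻¹ *ᵥ v with hBdef
  have hw0 : 0 ≤ w := quad_nonneg hZ x
  have hwpos : (0:ℝ) < 1 + w := by linarith
  have hquad := quad_update hZ x (v + η • x)
  have hxs : x ⬝ᵥ Z⁻¹ *ᵥ (v + η • x) = a + η * w := by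
    rw [Matrix.mulVec_add, mulVec_smul, dotProduct_add, dotProduct_smul, smul_eq_mul]
  have hvs : (v + η • x) ⬝ᵥ Z⁻¹ *ᵥ (v + η • x) = B + 2 * η * a + η ^ 2 * w := by
    simp only [Matrix.mulVec_add, mulVec_smul, dotProduct_add, add_dotProduct,
      dotProduct_smul, smul_dotProduct, smul_eq_mul]
    rw [dot_symm hZ v x]
    ring
  rw [hquad, hxs, hvs, ← hw, ← sub_nonneg]
  have key : B + 2 * η * a / (1 + w) + η ^ 2 * w / (1 + w) -
      (B + 2 * η * a + η ^ 2 * w - (1 + w)⁻¹ * (a + η * w) ^ 2) = a ^ 2 / (1 + w) := by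
    field_simp
    ring
  rw [key]
  positivity

end Aux

/-- Deterministic self-normalized decomposition:
`‖d_t‖²_{Z_t^{-1}} ≤ ∑_{i=1}^t 2η_i x_iᵀ Z_{i-1}^{-1} d_{i-1}/(1+w_i²) + ∑_{i=1}^t η_i² w_i²/(1+w_i²)`. -/
theorem statement3 {d : ℕ} (lam : ℝ) (hlam : 0 < lam) (t : ℕ)
    (x : ℕ → Fin d → ℝ) (η : ℕ → ℝ) :
    dVec x η t ⬝ᵥ ((gramZ lam x t)⁻¹ *ᵥ dVec x η t) ≤
      (∑ i ∈ Finset.Icc 1 t,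
          2 * η i * (x i ⬝ᵥ ((gramZ lam x (i - 1))⁻¹ *ᵥ dVec x η (i - 1))) /
            (1 + matNorm ((gramZ lam x (i - 1))⁻¹) (x i) ^ 2)) +
        ∑ i ∈ Finset.Icc 1 t,
          η i ^ 2 * matNorm ((gramZ lam x (i - 1))⁻¹) (x i) ^ 2 /
            (1 + matNorm ((gramZ lam x (i - 1))⁻¹) (x i) ^ 2) := by
  induction t with
  | zero =>
      simp [dVec]
  | succ t ih =>
      have h1 : (1:ℕ) ≤ t + 1 := Nat.le_add_left 1 t
      have hd : dVec x η (t + 1) = dVec x η t + η (t + 1) • x (t + 1) := by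
        unfold dVec; rw [Finset.sum_Icc_succ_top h1]
      have hZ : gramZ lam x (t + 1) = gramZ lam x t + vecMulVec (x (t + 1)) (x (t + 1)) := by
        unfold gramZ; rw [Finset.sum_Icc_succ_top h1, add_assoc]
      have hpd := gramZ_posDef lam hlam x t
      have hmn : matNorm ((gramZ lam x t)⁻¹) (x (t + 1)) ^ 2 =
          x (t + 1) ⬝ᵥ (gramZ lam x t)⁻¹ *ᵥ x (t + 1) := by
        unfold matNorm
        exact Real.sq_sqrt (quad_nonneg hpd (x (t + 1)))
      rw [hd, hZ, Finset.sum_Icc_succ_top h1, Finset.sum_Icc_succ_top h1]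
      have hstep := step_ineq hpd (x (t + 1)) (dVec x η t) (η (t + 1))
      simp only [Nat.add_sub_cancel] at *
      rw [hmn]
      linarith [hstep, ih]
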